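/- Let Ω ⊆ ℝⁿ (n ≥ 2) be a nonempty, open, bounded set and let G ⊆ Ω be Lebesgue-measurable with P_Ω(G) < ∞. Let ξ_k ↘ 0 and let φ_k : Ω → ℝ (k = 1, 2, …) be continuously differentiable with x ↦ |∇φ_k(x)|² and x ↦ W(φ_k(x)) Lebesgue integrable on Ω. Assume φ_k → χ_G almost everywhere in Ω and ∫_Ω [(ξ_k/2)|∇φ_k|² + W(φ_k)/ξ_k] dx → P_Ω(G) as k → ∞. Then ∫_Ω ( √(ξ_k/2) |∇φ_k| − √(W(φ_k)/ξ_k) )² dx → 0 as k → ∞. -/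

import Mathlib

open MeasureTheory Filter Topology RealInnerProductSpace

/-- The quartic double-well potential `W(s) = 18 s² (1-s)²`. -/
noncomputable def W (s : ℝ) : ℝ := 18 * s ^ 2 * (1 - s) ^ 2

/-- Divergence of a vector field on `ℝⁿ`. -/
noncomputable def vdiv {n : ℕ} (g : EuclideanSpace ℝ (Fin n) → EuclideanSpace ℝ (Fin n))
    (x : EuclideanSpace ℝ (Fin n)) : ℝ :=
  ∑ i, fderiv ℝ g x (EuclideanSpace.single i 1) i

/-- The set of numbers `∫_G div g` over admissible test vector fields `g` (C¹, compactly
supported in `Ω`, with `|g| ≤ 1`), whose supremum is the perimeter of `G` in `Ω`. -/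
noncomputable def perimSet {n : ℕ} (Ω G : Set (EuclideanSpace ℝ (Fin n))) : Set ℝ :=
  { r | ∃ g : EuclideanSpace ℝ (Fin n) → EuclideanSpace ℝ (Fin n),
      ContDiff ℝ 1 g ∧ HasCompactSupport g ∧ tsupport g ⊆ Ω ∧
      (∀ x, ‖g x‖ ≤ 1) ∧ r = ∫ x in G, vdiv g x }

/-- The perimeter `P_Ω(G)` of `G` in `Ω`. -/
noncomputable def perim {n : ℕ} (Ω G : Set (EuclideanSpace ℝ (Fin n))) : ℝ :=
  sSup (perimSet Ω G)

/-- STATEMENT 3. -/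

noncomputable def phi' (s : ℝ) : ℝ := max 0 (6 * s * (1 - s))

lemma phi'_cont : Continuous phi' := by
  unfold phi'; fun_prop

lemma phi'_nonneg (s : ℝ) : 0 ≤ phi' s := le_max_left _ _

lemma phi'_le (s : ℝ) : phi' s ≤ Real.sqrt (2 * W s) := by
  have h2W : 2 * W s = (6 * s * (1 - s)) ^ 2 := by unfold W; ring
  rw [h2W, Real.sqrt_sq_eq_abs]
  exact max_le (abs_nonneg _) (le_abs_self _)

noncomputable def Phi (s : ℝ) : ℝ := ∫ t in (0:ℝ)..s, phi' t

lemma Phi_hasDerivAt (s : ℝ) : HasDerivAt Phi (phi' s) s :=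
  intervalIntegral.integral_hasDerivAt_right (phi'_cont.intervalIntegrable _ _)
    (phi'_cont.stronglyMeasurable.stronglyMeasurableAtFilter)
    phi'_cont.continuousAt

lemma Phi_contDiff : ContDiff ℝ 1 Phi := by
  rw [contDiff_one_iff_deriv]
  refine ⟨fun s => (Phi_hasDerivAt s).differentiableAt, ?_⟩
  have : deriv Phi = phi' := funext fun s => (Phi_hasDerivAt s).deriv
  rw [this]; exact phi'_cont

lemma Phi_zero : Phi 0 = 0 := intervalIntegral.integral_same

lemma Phi_one : Phi 1 = 1 := by
  have h1 : Phi 1 = ∫ t in (0:ℝ)..1, (6 * t - 6 * t ^ 2) := by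
    refine intervalIntegral.integral_congr fun t ht => ?_
    rw [Set.uIcc_of_le (by norm_num)] at ht
    have : 0 ≤ 6 * t * (1 - t) := by nlinarith [ht.1, ht.2]
    unfold phi'
    rw [max_eq_right this]; ring
  rw [h1, intervalIntegral.integral_sub ((by fun_prop : Continuous fun t : ℝ => 6 * t).intervalIntegrable _ _)
    ((by fun_prop : Continuous fun t : ℝ => 6 * t ^ 2).intervalIntegrable _ _),
    intervalIntegral.integral_const_mul, intervalIntegral.integral_const_mul,
    integral_id, integral_pow]
  norm_num

lemma Phi_nonneg (s : ℝ) : 0 ≤ Phi s := by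
  rcases le_or_gt 0 s with h | h
  · exact intervalIntegral.integral_nonneg h fun u _ => phi'_nonneg u
  · have : Phi s = -∫ t in s..(0:ℝ), phi' t := by
      unfold Phi; exact intervalIntegral.integral_symm s 0
    rw [this]
    have hz : ∫ t in s..(0:ℝ), phi' t = ∫ t in s..(0:ℝ), (0:ℝ) := by
      refine intervalIntegral.integral_congr fun t ht => ?_
      rw [Set.uIcc_of_le h.le] at ht
      have : 6 * t * (1 - t) ≤ 0 := by nlinarith [ht.1, ht.2]
      exact max_eq_left this
    rw [hz]; simp

lemma Phi_le_one (s : ℝ) : Phi s ≤ 1 := by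
  rcases le_or_gt s 1 with h | h
  · have hadd : Phi s + ∫ t in s..(1:ℝ), phi' t = Phi 1 :=
      intervalIntegral.integral_add_adjacent_intervals
        (phi'_cont.intervalIntegrable _ _) (phi'_cont.intervalIntegrable _ _)
    have hpos : 0 ≤ ∫ t in s..(1:ℝ), phi' t :=
      intervalIntegral.integral_nonneg h fun u _ => phi'_nonneg u
    rw [Phi_one] at hadd; linarith
  · have hadd : Phi 1 + ∫ t in (1:ℝ)..s, phi' t = Phi s :=
      intervalIntegral.integral_add_adjacent_intervals
        (phi'_cont.intervalIntegrable _ _) (phi'_cont.intervalIntegrable _ _)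
    have hz : ∫ t in (1:ℝ)..s, phi' t = ∫ t in (1:ℝ)..s, (0:ℝ) := by
      refine intervalIntegral.integral_congr fun t ht => ?_
      rw [Set.uIcc_of_le h.le] at ht
      have : 6 * t * (1 - t) ≤ 0 := by nlinarith [ht.1, ht.2]
      exact max_eq_left this
    rw [hz] at hadd; rw [Phi_one] at hadd; simp at hadd; linarith

lemma W_nonneg (s : ℝ) : 0 ≤ W s := by unfold W; positivity

lemma key_pt {ξ : ℝ} (hξ : 0 < ξ) (s t : ℝ) :
    (Real.sqrt (ξ / 2) * t - Real.sqrt (W s / ξ)) ^ 2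
      = (ξ / 2 * t ^ 2 + W s / ξ) - Real.sqrt (2 * W s) * t := by
  have hW : 0 ≤ W s := W_nonneg s
  have e1 : Real.sqrt (ξ / 2) ^ 2 = ξ / 2 := Real.sq_sqrt (by linarith)
  have e2 : Real.sqrt (W s / ξ) ^ 2 = W s / ξ := Real.sq_sqrt (by positivity)
  have e3 : Real.sqrt (ξ / 2) * Real.sqrt (W s / ξ) = Real.sqrt (W s / 2) := by
    rw [← Real.sqrt_mul (by linarith)]
    congr 1; field_simp
  have e4 : Real.sqrt (2 * W s) = 2 * Real.sqrt (W s / 2) := by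
    rw [show (2:ℝ) * W s = 2 ^ 2 * (W s / 2) by ring, Real.sqrt_mul (by norm_num),
      Real.sqrt_sq (by norm_num)]
  calc (Real.sqrt (ξ / 2) * t - Real.sqrt (W s / ξ)) ^ 2
      = Real.sqrt (ξ / 2) ^ 2 * t ^ 2
        - 2 * (Real.sqrt (ξ / 2) * Real.sqrt (W s / ξ)) * t
        + Real.sqrt (W s / ξ) ^ 2 := by ring
    _ = (ξ / 2 * t ^ 2 + W s / ξ) - Real.sqrt (2 * W s) * t := by
        rw [e1, e2, e3, e4]; ring

lemma euclid_decomp {n : ℕ} (v : EuclideanSpace ℝ (Fin n)) :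
    ∑ i, (v i) • EuclideanSpace.single i (1:ℝ) = v := by
  ext j
  have h := map_sum (EuclideanSpace.proj (𝕜 := ℝ) j)
    (fun i => (v i) • EuclideanSpace.single i (1:ℝ)) Finset.univ
  have h2 : ∀ w : EuclideanSpace ℝ (Fin n), EuclideanSpace.proj (𝕜 := ℝ) j w = w j :=
    fun w => rfl
  rw [h2] at h
  rw [h]
  simp only [h2]
  simp [EuclideanSpace.single_apply]

lemma vdiv_zero_of_nmem_tsupport {n : ℕ}
    {F : EuclideanSpace ℝ (Fin n) → EuclideanSpace ℝ (Fin n)}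
    {x : EuclideanSpace ℝ (Fin n)} (hx : x ∉ tsupport F) : vdiv F x = 0 := by
  have : fderiv ℝ F x = 0 := by
    by_contra h
    exact hx (support_fderiv_subset ℝ (f := F) h)
  unfold vdiv
  simp [this]

lemma vdiv_continuous {n : ℕ}
    {F : EuclideanSpace ℝ (Fin n) → EuclideanSpace ℝ (Fin n)}
    (hF : ContDiff ℝ 1 F) : Continuous (vdiv F) := by
  have hfd : Continuous (fderiv ℝ F) := hF.continuous_fderiv one_ne_zero
  unfold vdiv
  refine continuous_finset_sum _ fun i _ => ?_
  have h1 : Continuous fun x => fderiv ℝ F x (EuclideanSpace.single i (1:ℝ)) :=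
    hfd.clm_apply continuous_const
  exact (EuclideanSpace.proj i).continuous.comp h1

lemma vdiv_integrable {n : ℕ}
    {F : EuclideanSpace ℝ (Fin n) → EuclideanSpace ℝ (Fin n)}
    (hF : ContDiff ℝ 1 F) (hsupp : HasCompactSupport F) : Integrable (vdiv F) := by
  refine (vdiv_continuous hF).integrable_of_hasCompactSupport ?_
  refine HasCompactSupport.intro hsupp fun x hx => vdiv_zero_of_nmem_tsupport hx

lemma integral_vdiv_eq_zero {m : ℕ}
    (F : EuclideanSpace ℝ (Fin (m+1)) → EuclideanSpace ℝ (Fin (m+1)))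
    (hF : ContDiff ℝ 1 F) (hsupp : HasCompactSupport F) :
    ∫ x, vdiv F x = 0 := by
  classical
  set e : EuclideanSpace ℝ (Fin (m+1)) ≃L[ℝ] (Fin (m+1) → ℝ) :=
    (EuclideanSpace.equiv (Fin (m+1)) ℝ)
  set ψ := (MeasurableEquiv.toLp 2 (Fin (m+1) → ℝ)).symm
  set K := tsupport F with hK
  have hKc : IsCompact K := hsupp
  have hKi : IsCompact (e '' K) := hKc.image e.continuous
  obtain ⟨R₀, hR₀⟩ := hKi.isBounded.exists_norm_le
  set R := max R₀ 0 with hRdef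
  have hR : ∀ y ∈ e '' K, ‖y‖ ≤ R := fun y hy => (hR₀ y hy).trans (le_max_left _ _)
  have hR0 : 0 ≤ R := le_max_right _ _
  set b : Fin (m+1) → ℝ := fun _ => R + 1 with hb
  set a : Fin (m+1) → ℝ := fun _ => -(R + 1) with ha
  have hab : a ≤ b := fun i => by simp [ha, hb]; linarith
  -- coordinates of points in the image of the support are ≤ R
  have hcoord : ∀ x ∈ K, ∀ i, |e x i| ≤ R := by
    intro x hx i
    have := hR (e x) ⟨x, hx, rfl⟩
    calc |e x i| = ‖e x i‖ := rfl
      _ ≤ ‖e x‖ := norm_le_pi_norm (e x) i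
      _ ≤ R := this
  have hKsub : K ⊆ ψ ⁻¹' (Set.Icc a b) := by
    intro x hx
    simp only [Set.mem_preimage, Set.mem_Icc]
    constructor <;> intro i <;>
      [have := (abs_le.1 (hcoord x hx i)).1; have := (abs_le.1 (hcoord x hx i)).2] <;>
      · simp only [ha, hb]
        have hψ : (ψ x : Fin (m+1) → ℝ) i = e x i := rfl
        rw [hψ]; linarith
  -- F vanishes at points with some coordinate of absolute value R + 1
  have hFzero : ∀ y : Fin (m+1) → ℝ, (∃ i, |y i| = R + 1) → F (e.symm y) = 0 := by
    rintro y ⟨i, hi⟩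
    by_contra h
    have hmem : e.symm y ∈ K := subset_tsupport F h
    have := hcoord _ hmem i
    rw [show e (e.symm y) = y from e.apply_symm_apply y] at this
    rw [hi] at this; linarith
  -- apply the divergence theorem on the box [a, b]
  set f : Fin (m+1) → (Fin (m+1) → ℝ) → ℝ := fun i y => F (e.symm y) i with hf
  set f' : Fin (m+1) → (Fin (m+1) → ℝ) → (Fin (m+1) → ℝ) →L[ℝ] ℝ := fun i y =>
    (EuclideanSpace.proj i).comp
      ((fderiv ℝ F (e.symm y)).comp (e.symm : (Fin (m+1) → ℝ) →L[ℝ] _)) with hf'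
  have hdiv := MeasureTheory.integral_divergence_of_hasFDerivAt_off_countable'
    a b hab f f' ∅ Set.countable_empty
    (fun i => ((EuclideanSpace.proj (𝕜 := ℝ) i).continuous.comp
      (hF.continuous.comp e.symm.continuous)).continuousOn)
    (fun y _ i => by
      have h1 : HasFDerivAt F (fderiv ℝ F (e.symm y)) (e.symm y) :=
        ((hF.differentiable one_ne_zero) (e.symm y)).hasFDerivAt
      have h2 : HasFDerivAt (fun z : Fin (m+1) → ℝ => F (e.symm z))
          ((fderiv ℝ F (e.symm y)).comp (e.symm : (Fin (m+1) → ℝ) →L[ℝ] _)) y :=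
        h1.comp y e.symm.hasFDerivAt
      exact ((EuclideanSpace.proj i).hasFDerivAt.comp y h2 : _))
    (by
      have hc : Continuous fun y : Fin (m+1) → ℝ => ∑ i, f' i y (Pi.single i 1) := by
        refine continuous_finset_sum _ fun i _ => ?_
        have : Continuous fun y : Fin (m+1) → ℝ => fderiv ℝ F (e.symm y) := 
          (hF.continuous_fderiv one_ne_zero).comp e.symm.continuous
        exact (EuclideanSpace.proj i).continuous.comp (this.clm_apply continuous_const)
      exact hc.continuousOn.integrableOn_compact isCompact_Icc)
  -- the face integrals vanish
  have hfaces : ∀ i : Fin (m+1),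
      ((∫ x in Set.Icc (a ∘ i.succAbove) (b ∘ i.succAbove), f i (i.insertNth (b i) x)) -
        ∫ x in Set.Icc (a ∘ i.succAbove) (b ∘ i.succAbove), f i (i.insertNth (a i) x)) = 0 := by
    intro i
    have h1 : ∀ x : Fin m → ℝ, f i (i.insertNth (b i) x) = 0 := by
      intro x
      have : F (e.symm (i.insertNth (b i) x)) = 0 :=
        hFzero _ ⟨i, by simp [hb, Fin.insertNth_apply_same]; linarith⟩
      simp [hf, this]
    have h2 : ∀ x : Fin m → ℝ, f i (i.insertNth (a i) x) = 0 := by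
      intro x
      have : F (e.symm (i.insertNth (a i) x)) = 0 :=
        hFzero _ ⟨i, by simp [ha, Fin.insertNth_apply_same]; rw [abs_of_nonpos (by linarith)]; ring⟩
      simp [hf, this]
    simp [h1, h2]
  rw [Finset.sum_congr rfl fun i _ => hfaces i, Finset.sum_const_zero] at hdiv
  -- identify the integrand with vdiv F ∘ e.symm
  have hint : ∀ y : Fin (m+1) → ℝ, (∑ i, f' i y (Pi.single i 1)) = vdiv F (e.symm y) := by
    intro y
    unfold vdiv
    refine Finset.sum_congr rfl fun i _ => ?_
    have hsingle : (e.symm : (Fin (m+1) → ℝ) → EuclideanSpace ℝ (Fin (m+1))) (Pi.single i 1)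
        = EuclideanSpace.single i (1:ℝ) := rfl
    simp only [hf', ContinuousLinearMap.coe_comp', Function.comp_apply,
      ContinuousLinearEquiv.coe_coe]
    rw [hsingle]
    rfl
  rw [setIntegral_congr_fun measurableSet_Icc (fun y _ => hint y)] at hdiv
  -- transfer to the Euclidean space integral
  have hvp := (EuclideanSpace.volume_preserving_symm_measurableEquiv_toLp (Fin (m+1)))
  have htrans : ∫ x in ψ ⁻¹' (Set.Icc a b), vdiv F x
      = ∫ y in Set.Icc a b, vdiv F (e.symm y) := by
    have := hvp.setIntegral_preimage_emb ψ.measurableEmbedding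
      (fun y => vdiv F (e.symm y)) (Set.Icc a b)
    rw [← this]
    refine setIntegral_congr_fun (hvp.measurable (measurableSet_Icc)) fun x _ => ?_
    congr 1
  rw [← htrans] at hdiv
  rw [← hdiv]
  symm
  refine setIntegral_eq_integral_of_forall_compl_eq_zero fun x hx => ?_
  exact vdiv_zero_of_nmem_tsupport fun hmem => hx (hKsub hmem)

theorem equipartition_sq {n : ℕ} (hn : 2 ≤ n)
    (Ω : Set (EuclideanSpace ℝ (Fin n))) (hΩne : Ω.Nonempty) (hΩopen : IsOpen Ω)
    (hΩbdd : Bornology.IsBounded Ω)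
    (G : Set (EuclideanSpace ℝ (Fin n))) (hGmeas : MeasurableSet G) (hGΩ : G ⊆ Ω)
    (hPfin : BddAbove (perimSet Ω G))
    (ξ : ℕ → ℝ) (hξpos : ∀ k, 0 < ξ k) (hξanti : StrictAnti ξ)
    (hξ0 : Tendsto ξ atTop (𝓝 0))
    (φ : ℕ → EuclideanSpace ℝ (Fin n) → ℝ)
    (hφ : ∀ k, ContDiffOn ℝ 1 (φ k) Ω)
    (hgradInt : ∀ k, IntegrableOn (fun x => ‖gradient (φ k) x‖ ^ 2) Ω)
    (hWInt : ∀ k, IntegrableOn (fun x => W (φ k x)) Ω)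
    (hae : ∀ᵐ x ∂(volume.restrict Ω),
      Tendsto (fun k => φ k x) atTop (𝓝 (G.indicator (fun _ => (1 : ℝ)) x)))
    (henergy : Tendsto
      (fun k => ∫ x in Ω, (ξ k / 2 * ‖gradient (φ k) x‖ ^ 2 + W (φ k x) / ξ k))
      atTop (𝓝 (perim Ω G))) :
    Tendsto (fun k => ∫ x in Ω,
        (Real.sqrt (ξ k / 2) * ‖gradient (φ k) x‖ - Real.sqrt (W (φ k x) / ξ k)) ^ 2)
      atTop (𝓝 0) := by
  obtain ⟨m, rfl⟩ : ∃ m, n = m + 1 := ⟨n - 1, by omega⟩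
  have mΩ : MeasurableSet Ω := hΩopen.measurableSet
  set D : ℕ → EuclideanSpace ℝ (Fin (m+1)) → ℝ :=
    fun k x => Real.sqrt (2 * W (φ k x)) * ‖gradient (φ k) x‖ with hDdef
  -- basic facts about gradients and fderivs
  have hgn : ∀ k x, ‖gradient (φ k) x‖ = ‖fderiv ℝ (φ k) x‖ := fun k x =>
    LinearIsometryEquiv.norm_map _ _
  have hfdcont : ∀ k, ContinuousOn (fun x => fderiv ℝ (φ k) x) Ω := fun k =>
    (hφ k).continuousOn_fderiv_of_isOpen hΩopen le_rfl
  have hgradcont : ∀ k, ContinuousOn (fun x => gradient (φ k) x) Ω := fun k =>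
    (InnerProductSpace.toDual ℝ _).symm.continuous.comp_continuousOn (hfdcont k)
  have hdφ : ∀ k, ∀ x ∈ Ω, HasFDerivAt (φ k) (fderiv ℝ (φ k) x) x := fun k x hx =>
    ((((hφ k) x hx).contDiffAt (hΩopen.mem_nhds hx)).differentiableAt one_ne_zero).hasFDerivAt
  -- integrability facts
  have hsumInt : ∀ k, IntegrableOn
      (fun x => ξ k / 2 * ‖gradient (φ k) x‖ ^ 2 + W (φ k x) / ξ k) Ω := fun k =>
    ((hgradInt k).const_mul (ξ k / 2)).add ((hWInt k).div_const (ξ k))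
  have hDnonneg : ∀ k x, 0 ≤ D k x := fun k x =>
    mul_nonneg (Real.sqrt_nonneg _) (norm_nonneg _)
  have hDle : ∀ k x, D k x ≤ ξ k / 2 * ‖gradient (φ k) x‖ ^ 2 + W (φ k x) / ξ k := by
    intro k x
    simp only [hDdef]
    have h := key_pt (hξpos k) (φ k x) ‖gradient (φ k) x‖
    nlinarith [sq_nonneg (Real.sqrt (ξ k / 2) * ‖gradient (φ k) x‖
      - Real.sqrt (W (φ k x) / ξ k))]
  have hDcont : ∀ k, ContinuousOn (D k) Ω := by
    intro k
    refine ContinuousOn.mul ?_ (hgradcont k).norm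
    refine Real.continuous_sqrt.comp_continuousOn ?_
    have hWc : Continuous W := by unfold W; fun_prop
    exact (continuous_const.mul hWc).comp_continuousOn (hφ k).continuousOn
  have hDint : ∀ k, IntegrableOn (D k) Ω := by
    intro k
    refine Integrable.mono (hsumInt k) ((hDcont k).aestronglyMeasurable mΩ)
      (Filter.Eventually.of_forall fun x => ?_)
    rw [Real.norm_eq_abs, Real.norm_eq_abs, abs_of_nonneg (hDnonneg k x),
      abs_of_nonneg (le_trans (hDnonneg k x) (hDle k x))]
    exact hDle k x
  -- the main per-test-field facts
  have hmain : ∀ g : EuclideanSpace ℝ (Fin (m+1)) → EuclideanSpace ℝ (Fin (m+1)),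
      ContDiff ℝ 1 g → HasCompactSupport g → tsupport g ⊆ Ω → (∀ x, ‖g x‖ ≤ 1) →
      (Tendsto (fun k => ∫ x in Ω, Phi (φ k x) * vdiv g x) atTop
        (𝓝 (∫ x in G, vdiv g x))) ∧
      (∀ k, (∫ x in Ω, Phi (φ k x) * vdiv g x) ≤ ∫ x in Ω, D k x) := by
    intro g hg1 hg2 hg3 hg4
    have hvint : Integrable (vdiv g) (volume.restrict Ω) :=
      (vdiv_integrable hg1 hg2).restrict
    have hPhimeas : ∀ k, AEStronglyMeasurable (fun x => Phi (φ k x))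
        (volume.restrict Ω) := fun k =>
      (Phi_contDiff.continuous.comp_continuousOn (hφ k).continuousOn).aestronglyMeasurable mΩ
    have hPhibd : ∀ s : ℝ, ‖Phi s‖ ≤ 1 := fun s => by
      rw [Real.norm_eq_abs, abs_of_nonneg (Phi_nonneg s)]; exact Phi_le_one s
    constructor
    · -- dominated convergence
      have hlim : Tendsto (fun k => ∫ x in Ω, Phi (φ k x) * vdiv g x) atTop
          (𝓝 (∫ x in Ω, G.indicator (fun _ => (1:ℝ)) x * vdiv g x)) := by
        refine tendsto_integral_of_dominated_convergence (fun x => ‖vdiv g x‖)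
          (fun k => (hPhimeas k).mul hvint.1) hvint.norm
          (fun k => Filter.Eventually.of_forall fun x => ?_) ?_
        · rw [norm_mul]
          exact mul_le_of_le_one_left (norm_nonneg _) (hPhibd _)
        · refine hae.mono fun x hx => ?_
          have h1 : Tendsto (fun k => Phi (φ k x)) atTop
              (𝓝 (Phi (G.indicator (fun _ => (1:ℝ)) x))) :=
            (Phi_contDiff.continuous.continuousAt.tendsto).comp hx
          have h2 : Phi (G.indicator (fun _ => (1:ℝ)) x) = G.indicator (fun _ => (1:ℝ)) x := by
            by_cases hxG : x ∈ G <;> simp [hxG, Phi_one, Phi_zero]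
          rw [h2] at h1
          exact h1.mul_const _
      have heq : (∫ x in Ω, G.indicator (fun _ => (1:ℝ)) x * vdiv g x)
          = ∫ x in G, vdiv g x := by
        have hptind : ∀ x, G.indicator (fun _ => (1:ℝ)) x * vdiv g x
            = G.indicator (fun y => vdiv g y) x := by
          intro x; by_cases hx : x ∈ G <;> simp [hx]
        simp_rw [hptind]
        rw [setIntegral_indicator hGmeas, Set.inter_eq_self_of_subset_right hGΩ]
      rwa [heq] at hlim
    · -- integration by parts inequality
      intro k
      set F : EuclideanSpace ℝ (Fin (m+1)) → EuclideanSpace ℝ (Fin (m+1)) :=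
        fun x => Phi (φ k x) • g x with hFdef
      have hFc : ContDiff ℝ 1 F := by
        rw [← contDiffOn_univ]
        apply contDiffOn_of_locally_contDiffOn
        intro x _
        by_cases hx : x ∈ Ω
        · exact ⟨Ω, hΩopen, hx,
            ((Phi_contDiff.comp_contDiffOn (hφ k)).smul hg1.contDiffOn).mono
              Set.inter_subset_right⟩
        · refine ⟨(tsupport g)ᶜ, (isClosed_tsupport g).isOpen_compl,
            fun hmem => hx (hg3 hmem), ?_⟩
          refine (contDiffOn_const (c := (0 : EuclideanSpace ℝ (Fin (m+1))))).congr ?_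
          rintro y ⟨-, hy⟩
          show Phi (φ k y) • g y = 0
          rw [image_eq_zero_of_notMem_tsupport hy, smul_zero]
      have hFsupp : HasCompactSupport F := hg2.smul_left (f := fun x => Phi (φ k x))
      have htsF : tsupport F ⊆ tsupport g :=
        closure_mono (Function.support_smul_subset_right (fun x => Phi (φ k x)) g)
      have h0 : ∫ x, vdiv F x = 0 := integral_vdiv_eq_zero F hFc hFsupp
      have hΩeq : ∫ x in Ω, vdiv F x = 0 := by
        rw [setIntegral_eq_integral_of_forall_compl_eq_zero fun x hx =>
          vdiv_zero_of_nmem_tsupport fun hmem => hx (hg3 (htsF hmem))]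
        exact h0
      -- pointwise product rule on Ω
      have hpt : ∀ x ∈ Ω, vdiv F x
          = Phi (φ k x) * vdiv g x + phi' (φ k x) * (fderiv ℝ (φ k) x (g x)) := by
        intro x hx
        have hu : HasFDerivAt (fun y => Phi (φ k y))
            ((phi' (φ k x)) • fderiv ℝ (φ k) x) x :=
          (Phi_hasDerivAt (φ k x)).comp_hasFDerivAt x (hdφ k x hx)
        have hgd : HasFDerivAt g (fderiv ℝ g x) x :=
          (hg1.differentiable one_ne_zero x).hasFDerivAt
        have hF' : HasFDerivAt F (Phi (φ k x) • fderiv ℝ g x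
            + ((phi' (φ k x)) • fderiv ℝ (φ k) x).smulRight (g x)) x := hu.smul hgd
        have hlin : fderiv ℝ (φ k) x (g x)
            = ∑ i, g x i * fderiv ℝ (φ k) x (EuclideanSpace.single i 1) := by
          conv_lhs => rw [← euclid_decomp (g x)]
          rw [map_sum]
          simp [smul_eq_mul]
        unfold vdiv
        rw [hF'.fderiv]
        simp only [ContinuousLinearMap.add_apply, ContinuousLinearMap.coe_smul',
          Pi.smul_apply, ContinuousLinearMap.smulRight_apply, PiLp.add_apply,
          PiLp.smul_apply, smul_eq_mul]
        rw [Finset.sum_add_distrib, ← Finset.mul_sum]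
        rw [hlin]
        have hsum : ∑ i : Fin (m+1), phi' (φ k x)
              * (fderiv ℝ (φ k) x) (EuclideanSpace.single i 1) * g x i
            = phi' (φ k x) * ∑ i : Fin (m+1),
              g x i * (fderiv ℝ (φ k) x) (EuclideanSpace.single i 1) := by
          rw [Finset.mul_sum]
          exact Finset.sum_congr rfl fun i _ => by ring
        rw [hsum]
      -- integrability of the two pieces
      have hmulint : IntegrableOn (fun x => Phi (φ k x) * vdiv g x) Ω :=
        Integrable.bdd_mul (c := 1) hvint (hPhimeas k) (Filter.Eventually.of_forall fun x => hPhibd _)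
      have hcrossbd : ∀ x, |phi' (φ k x) * fderiv ℝ (φ k) x (g x)| ≤ D k x := by
        intro x
        rw [abs_mul, abs_of_nonneg (phi'_nonneg _)]
        refine mul_le_mul (phi'_le _) ?_ (abs_nonneg _) (Real.sqrt_nonneg _)
        calc |fderiv ℝ (φ k) x (g x)| ≤ ‖fderiv ℝ (φ k) x‖ * ‖g x‖ :=
              (fderiv ℝ (φ k) x).le_opNorm _
          _ ≤ ‖fderiv ℝ (φ k) x‖ * 1 := by
              have := hg4 x
              gcongr
          _ = ‖gradient (φ k) x‖ := by rw [mul_one, hgn]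
      have hcrosscont : ContinuousOn
          (fun x => phi' (φ k x) * (fderiv ℝ (φ k) x (g x))) Ω :=
        (phi'_cont.comp_continuousOn (hφ k).continuousOn).mul
          ((hfdcont k).clm_apply hg1.continuous.continuousOn)
      have hcrossint : IntegrableOn
          (fun x => phi' (φ k x) * (fderiv ℝ (φ k) x (g x))) Ω := by
        refine Integrable.mono (hDint k) (hcrosscont.aestronglyMeasurable mΩ)
          (Filter.Eventually.of_forall fun x => ?_)
        rw [Real.norm_eq_abs, Real.norm_eq_abs, abs_of_nonneg (hDnonneg k x)]
        exact hcrossbd x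
      have hsplit : (∫ x in Ω, Phi (φ k x) * vdiv g x)
          + (∫ x in Ω, phi' (φ k x) * (fderiv ℝ (φ k) x (g x))) = 0 := by
        rw [← integral_add hmulint hcrossint]
        rw [← setIntegral_congr_fun mΩ fun x hx => hpt x hx]
        exact hΩeq
      have hneg : (∫ x in Ω, Phi (φ k x) * vdiv g x)
          = ∫ x in Ω, -(phi' (φ k x) * (fderiv ℝ (φ k) x (g x))) := by
        rw [integral_neg]; linarith
      rw [hneg]
      refine integral_mono hcrossint.neg (hDint k) fun x => ?_
      have h1 := hcrossbd x
      have h2 := neg_abs_le (phi' (φ k x) * (fderiv ℝ (φ k) x (g x)))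
      show -(phi' (φ k x) * (fderiv ℝ (φ k) x (g x))) ≤ D k x
      linarith
  -- pointwise identity for the target integral
  have hEq : ∀ k, (∫ x in Ω, (Real.sqrt (ξ k / 2) * ‖gradient (φ k) x‖
        - Real.sqrt (W (φ k x) / ξ k)) ^ 2)
      = (∫ x in Ω, (ξ k / 2 * ‖gradient (φ k) x‖ ^ 2 + W (φ k x) / ξ k))
        - ∫ x in Ω, D k x := by
    intro k
    rw [← integral_sub (hsumInt k) (hDint k)]
    exact integral_congr_ae (Filter.Eventually.of_forall fun x =>
      key_pt (hξpos k) (φ k x) ‖gradient (φ k) x‖)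
  have hnonneg : ∀ k, 0 ≤ ∫ x in Ω, (Real.sqrt (ξ k / 2) * ‖gradient (φ k) x‖
      - Real.sqrt (W (φ k x) / ξ k)) ^ 2 := fun k =>
    integral_nonneg fun x => sq_nonneg _
  -- epsilon argument
  refine Metric.tendsto_nhds.mpr fun ε hε => ?_
  have hne : (perimSet Ω G).Nonempty := by
    refine ⟨0, fun _ => 0, contDiff_const, ?_, ?_, fun x => by simp, ?_⟩
    · have : tsupport (fun _ : EuclideanSpace ℝ (Fin (m+1))
          => (0 : EuclideanSpace ℝ (Fin (m+1)))) = ∅ := by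
        simp [tsupport]
      rw [HasCompactSupport, this]
      exact isCompact_empty
    · have : tsupport (fun _ : EuclideanSpace ℝ (Fin (m+1))
          => (0 : EuclideanSpace ℝ (Fin (m+1)))) = ∅ := by
        simp [tsupport]
      rw [this]
      exact Set.empty_subset _
    · have : ∀ x, vdiv (fun _ : EuclideanSpace ℝ (Fin (m+1))
          => (0 : EuclideanSpace ℝ (Fin (m+1)))) x = 0 := by
        intro x
        unfold vdiv
        simp [fderiv_const]
      simp [this]
  have hlt : perim Ω G - ε / 2 < sSup (perimSet Ω G) := by
    have : perim Ω G = sSup (perimSet Ω G) := rfl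
    linarith
  obtain ⟨r, hrmem, hrlt⟩ := exists_lt_of_lt_csSup hne hlt
  obtain ⟨g, hg1, hg2, hg3, hg4, rfl⟩ := hrmem
  obtain ⟨htend, hineq⟩ := hmain g hg1 hg2 hg3 hg4
  have ev1 : ∀ᶠ k in atTop, perim Ω G - ε / 2 < ∫ x in Ω, Phi (φ k x) * vdiv g x :=
    htend.eventually (eventually_gt_nhds hrlt)
  have ev2 : ∀ᶠ k in atTop,
      (∫ x in Ω, (ξ k / 2 * ‖gradient (φ k) x‖ ^ 2 + W (φ k x) / ξ k))
        < perim Ω G + ε / 2 :=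
    henergy.eventually (eventually_lt_nhds (by linarith))
  filter_upwards [ev1, ev2] with k h1 h2
  rw [Real.dist_eq, sub_zero, abs_of_nonneg (hnonneg k), hEq k]
  have h3 := hineq k
  linarith
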